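/- Suppose nonnegative reals n_1, …, n_m and a nonincreasing sequence of nonnegative integers t_1 ≥ t_2 ≥ … ≥ t_m with t_i distinct (t_i strictly decreasing), satisfy n_1 + … + n_i ≤ n / 2^(t_i + 1) for all i, where t_m ≥ 0. Then ∑_{i=1}^m n_i · t_i ≤ n · ∑_{j=0}^{∞} j / 2^(j+1) ≤ n. -/

import Mathlib

open scoped BigOperators

lemma stmt14_pow_bound (k : ℕ) : k + 2 ≤ 2 ^ (k + 1) := by
  induction k with
  | zero => norm_num
  | succ k ih =>
    have : 2 ≤ 2 ^ (k + 1) := Nat.one_lt_two_pow (by omega)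
    calc k + 1 + 2 ≤ 2 ^ (k + 1) + 2 ^ (k + 1) := by omega
    _ = 2 ^ (k + 2) := by ring

lemma stmt14_aux : ∀ (m : ℕ) (n : ℝ) (a : Fin (m+1) → ℝ) (t : Fin (m+1) → ℕ),
    0 ≤ n → (∀ i, 0 ≤ a i) → StrictAnti t →
    (∀ i : Fin (m+1), (∑ j ∈ Finset.univ.filter (· ≤ i), a j) ≤ n / 2 ^ (t i + 1)) →
    (∑ i, a i * t i) ≤ n * (t (Fin.last m) + 2) / 2 ^ (t (Fin.last m) + 1) := by
  intro m
  induction m with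
  | zero =>
    intro n a t hn ha ht hpre
    have h0 := hpre 0
    have hfil : (Finset.univ.filter (· ≤ (0 : Fin 1))) = Finset.univ := by
      ext j; simp [Fin.le_def, Fin.ext_iff]
    rw [hfil, Fin.sum_univ_one] at h0
    rw [Fin.sum_univ_one]
    have hlast : Fin.last 0 = 0 := rfl
    rw [hlast]
    calc a 0 * t 0 ≤ (n / 2 ^ (t 0 + 1)) * ((t 0 : ℝ) + 2) := by
          apply mul_le_mul h0 (by linarith [Nat.cast_nonneg (α := ℝ) (t 0)])
            (Nat.cast_nonneg _) (by positivity)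
      _ = n * ((t 0 : ℝ) + 2) / 2 ^ (t 0 + 1) := by ring
  | succ m ih =>
    intro n a t hn ha ht hpre
    set T := t (Fin.last (m+1)) with hTdef
    have hT : ∀ i : Fin (m+1), T < t i.castSucc := fun i => ht (Fin.castSucc_lt_last i)
    set a' : Fin (m+1) → ℝ := fun i => a i.castSucc with ha'def
    set t' : Fin (m+1) → ℕ := fun i => t i.castSucc - T with ht'def
    have ht'eq : ∀ i : Fin (m+1), t i.castSucc = t' i + T := by
      intro i; have := hT i; simp only [ht'def]; omega
    have hp : (0:ℝ) < 2 ^ T := by positivity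
    have ht' : StrictAnti t' := by
      intro i j hij
      have h1 : t j.castSucc < t i.castSucc := ht (by simpa using hij)
      have := hT j
      simp only [ht'def]
      omega
    have hpre' : ∀ i : Fin (m+1),
        (∑ j ∈ Finset.univ.filter (· ≤ i), a' j) ≤ (n / 2 ^ T) / 2 ^ (t' i + 1) := by
      intro i
      have h1 : ∑ j ∈ Finset.univ.filter (· ≤ i.castSucc), a j
          = ∑ j ∈ Finset.univ.filter (· ≤ i), a' j := by
        simp only [Finset.sum_filter]
        rw [Fin.sum_univ_castSucc (f := fun j => if j ≤ i.castSucc then a j else 0)]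
        simp [Finset.sum_filter, Fin.castSucc_le_castSucc_iff, (Fin.castSucc_lt_last i).not_ge]
        rfl
      rw [← h1]
      refine (hpre i.castSucc).trans (le_of_eq ?_)
      rw [ht'eq i, show t' i + T + 1 = T + (t' i + 1) by ring, pow_add, div_div]
    have hIH := ih (n / 2 ^ T) a' t' (by positivity) (fun i => ha _) ht' hpre'
    set d := t' (Fin.last m) with hddef
    have hC : ((d:ℝ) + 2) / 2 ^ (d + 1) ≤ 1 := by
      rw [div_le_one (by positivity)]
      exact_mod_cast stmt14_pow_bound d
    have hA : (∑ i, a' i * t' i) ≤ n / 2 ^ T := by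
      refine hIH.trans ?_
      calc n / 2 ^ T * ((d:ℝ) + 2) / 2 ^ (d + 1)
          = (n / 2 ^ T) * (((d:ℝ) + 2) / 2 ^ (d + 1)) := by ring
        _ ≤ (n / 2 ^ T) * 1 := mul_le_mul_of_nonneg_left hC (by positivity)
        _ = n / 2 ^ T := mul_one _
    have hS : (∑ i, a' i) + a (Fin.last (m+1)) ≤ n / 2 ^ (T + 1) := by
      have h := hpre (Fin.last (m+1))
      rw [Finset.filter_true_of_mem (fun j _ => Fin.le_last j)] at h
      rw [Fin.sum_univ_castSucc] at h
      exact h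
    rw [Fin.sum_univ_castSucc]
    have hsplit : (∑ i : Fin (m+1), a i.castSucc * (t i.castSucc : ℝ))
        = (∑ i, a' i * t' i) + (∑ i, a' i) * T := by
      rw [Finset.sum_mul, ← Finset.sum_add_distrib]
      apply Finset.sum_congr rfl
      intro i _
      rw [ht'eq i]; push_cast; ring
    rw [hsplit]
    have hST : ((∑ i, a' i) + a (Fin.last (m+1))) * (T : ℝ) ≤ (n / 2 ^ (T + 1)) * T :=
      mul_le_mul_of_nonneg_right hS (Nat.cast_nonneg _)
    calc (∑ i, a' i * t' i) + (∑ i, a' i) * (T:ℝ) + a (Fin.last (m+1)) * T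
        = (∑ i, a' i * t' i) + ((∑ i, a' i) + a (Fin.last (m+1))) * T := by ring
      _ ≤ n / 2 ^ T + (n / 2 ^ (T + 1)) * T := add_le_add hA hST
      _ = n * ((T:ℝ) + 2) / 2 ^ (T + 1) := by rw [pow_succ]; field_simp; ring

theorem stmt_14 (m : ℕ) (n : ℝ) (hn : 0 ≤ n)
    (a : Fin m → ℝ) (t : Fin m → ℕ)
    (ha : ∀ i, 0 ≤ a i)
    (ht : StrictAnti t)
    (hpre : ∀ i : Fin m, (∑ j ∈ Finset.univ.filter (· ≤ i), a j) ≤ n / 2 ^ (t i + 1)) :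
    (∑ i, a i * t i) ≤ n * (∑' j : ℕ, (j : ℝ) / 2 ^ (j + 1)) ∧
      n * (∑' j : ℕ, (j : ℝ) / 2 ^ (j + 1)) ≤ n := by
  have htsum : (∑' j : ℕ, (j : ℝ) / 2 ^ (j + 1)) = 1 := by
    have h1 : ∀ j : ℕ, (j : ℝ) / 2 ^ (j + 1) = ((j : ℝ) * (1/2) ^ j) * (1/2) := by
      intro j
      rw [pow_succ, div_pow, one_pow]
      field_simp
    rw [tsum_congr h1, tsum_mul_right,
      tsum_coe_mul_geometric_of_norm_lt_one (r := (1/2 : ℝ)) (by rw [Real.norm_eq_abs, abs_of_nonneg (by norm_num : (0:ℝ) ≤ 1/2)]; norm_num)]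
    norm_num
  rw [htsum, mul_one]
  refine ⟨?_, le_refl n⟩
  cases m with
  | zero => simpa using hn
  | succ m =>
    have h := stmt14_aux m n a t hn ha ht hpre
    refine h.trans ?_
    set T := t (Fin.last m)
    have hb : ((T:ℝ) + 2) ≤ 2 ^ (T + 1) := by exact_mod_cast stmt14_pow_bound T
    rw [div_le_iff₀ (by positivity)]
    nlinarith [pow_pos (by norm_num : (0:ℝ) < 2) (T+1)]
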